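/- Suppose the identity C·∑_k Δ(k)/∏_i(k_i!(k_i+s)!) z^k = ∑_k [Δ(k_1,…,k_m)Δ(k_{m+1},…,k_{m+n}) / ∏_i(k_i!(k_i+s)!)] ∏_{i≤m, j≥m+1} (z_i − z_j)/(k_i+k_j+s+1) z^k holds, as formal power series in z_1,…,z_{m+n}, for some constant C and parameters (m, n, s) with s a nonnegative integer. Then setting z_{m+n} = 0, dividing through by z_1⋯z_{m+n−1} and re-indexing k_i ↦ k_i + 1 yields the same identity with the same constant C for parameters (m, n−1, s+1). -/

import Mathlib

open Finset MvPolynomial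

/-- The coefficient of `z^k` in `C ∑_k Δ(k)/∏ᵢ(kᵢ!(kᵢ+s)!) z^k`. -/
noncomputable def lhsCoeff (C : ℂ) (m n s : ℕ) (k : Fin (m + n) → ℕ) : ℂ :=
  C * (∏ i : Fin (m + n), ∏ j ∈ Finset.Ioi i, ((k i : ℂ) - (k j : ℂ))) /
    ∏ i : Fin (m + n), (((k i).factorial : ℂ) * ((k i + s).factorial : ℂ))

/-- The coefficient of `z^k` in
`∑_l [Δ(l₁)Δ(l₂)/∏ᵢ(lᵢ!(lᵢ+s)!)] ∏_{i≤m,j≥m+1} (zᵢ-zⱼ)/(lᵢ+lⱼ+s+1) z^l`. -/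
noncomputable def rhsCoeff (m n s : ℕ) (k : Fin (m + n) → ℕ) : ℂ :=
  ∑ l ∈ Finset.Icc (0 : Fin (m + n) → ℕ) k,
    ((∏ a : Fin m, ∏ b ∈ Finset.Ioi a,
        ((l (Fin.castAdd n a) : ℂ) - (l (Fin.castAdd n b) : ℂ))) *
      (∏ a : Fin n, ∏ b ∈ Finset.Ioi a,
        ((l (Fin.natAdd m a) : ℂ) - (l (Fin.natAdd m b) : ℂ))) /
      (∏ i : Fin (m + n), (((l i).factorial : ℂ) * ((l i + s).factorial : ℂ))) *
      (∏ a : Fin m, ∏ b : Fin n,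
        (1 / ((l (Fin.castAdd n a) : ℂ) + (l (Fin.natAdd m b) : ℂ) + s + 1))) *
      MvPolynomial.coeff
        (Finsupp.equivFunOnFinite.symm (fun i => k i - l i))
        (∏ a : Fin m, ∏ b : Fin n,
          (X (Fin.castAdd n a) - X (Fin.natAdd m b) :
            MvPolynomial (Fin (m + n)) ℂ)))

lemma coeff_aeval_elim {σ : Type*} [DecidableEq σ] (t : σ) (p : MvPolynomial σ ℂ)
    (d : σ →₀ ℕ) (hd : d t = 0) :
    coeff d p = coeff d (aeval (fun i => if i = t then (0 : MvPolynomial σ ℂ) else X i) p) := by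
  induction p using MvPolynomial.induction_on' with
  | monomial u a =>
    rw [aeval_monomial]
    by_cases ut : u t = 0
    · have he : (u.prod fun n e => (if n = t then (0 : MvPolynomial σ ℂ) else X n) ^ e) =
          u.prod fun n e => (X n : MvPolynomial σ ℂ) ^ e := by
        apply Finsupp.prod_congr
        intro i hi
        rw [if_neg]
        rintro rfl
        exact (Finsupp.mem_support_iff.mp hi) ut
      rw [he, MvPolynomial.algebraMap_eq, ← MvPolynomial.monomial_eq]
    · have ht : t ∈ u.support := Finsupp.mem_support_iff.mpr ut
      have he : (u.prod fun n e => (if n = t then (0 : MvPolynomial σ ℂ) else X n) ^ e) = 0 := by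
        apply Finset.prod_eq_zero ht
        show (if t = t then (0 : MvPolynomial σ ℂ) else X t) ^ (u t) = 0
        rw [if_pos rfl, zero_pow ut]
      rw [he, mul_zero, coeff_zero, coeff_monomial, if_neg]
      rintro rfl
      exact ut hd
  | add p q hp hq => simp [hp, hq, coeff_add]

lemma prod_X_eq_monomial {σ α : Type*} [DecidableEq σ] [DecidableEq α] (s : Finset α) (f : α → σ) :
    (∏ a ∈ s, (X (f a) : MvPolynomial σ ℂ)) =
      monomial (∑ a ∈ s, Finsupp.single (f a) 1) 1 := by
  induction s using Finset.induction_on with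
  | empty => simp
  | @insert a s h ih =>
    rw [Finset.prod_insert h, Finset.sum_insert h, ih, X, monomial_mul, mul_one]

lemma Ioi_last_empty (N : ℕ) : (Finset.Ioi (Fin.last N)) = ∅ := by
  ext j; simpa using Fin.le_last j

lemma Ioi_eq_filt {N : ℕ} (i : Fin N) : Finset.Ioi i = Finset.univ.filter (i < ·) := by
  ext j; simp

lemma prod_Ioi_castSucc {M : Type*} [CommMonoid M] {N : ℕ} (i : Fin N) (F : Fin (N+1) → M) :
    ∏ j ∈ Ioi (Fin.castSucc i), F j = (∏ j ∈ Ioi i, F j.castSucc) * F (Fin.last N) := by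
  rw [Ioi_eq_filt, Finset.prod_filter, Fin.prod_univ_castSucc]
  rw [if_pos (Fin.castSucc_lt_last i)]
  congr 1
  rw [Ioi_eq_filt, Finset.prod_filter]
  exact Finset.prod_congr rfl fun j _ => by simp [Fin.castSucc_lt_castSucc_iff]

lemma vand_split {M : Type*} [CommRing M] {N : ℕ} (F : Fin (N+1) → M) :
    ∏ i : Fin (N+1), ∏ j ∈ Ioi i, (F i - F j) =
      ((∏ i : Fin N, ∏ j ∈ Ioi i, (F i.castSucc - F j.castSucc)) *
        ∏ i : Fin N, (F i.castSucc - F (Fin.last N))) := by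
  rw [Fin.prod_univ_castSucc, Ioi_last_empty, Finset.prod_empty, mul_one, ← Finset.prod_mul_distrib]
  exact Finset.prod_congr rfl fun i _ => prod_Ioi_castSucc i _

lemma lhsA (C : ℂ) (m n s : ℕ) (k : Fin (m + n) → ℕ) :
    lhsCoeff C m (n + 1) s (Fin.snoc (fun i => k i + 1) 0) * (s.factorial : ℂ) =
      lhsCoeff C m n (s + 1) k := by
  rw [lhsCoeff, lhsCoeff]
  show (C * ∏ i : Fin (m + n + 1), ∏ j ∈ Finset.Ioi i,
        (((Fin.snoc (fun i => k i + 1) 0 : Fin (m+n+1) → ℕ) i : ℂ) -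
          ((Fin.snoc (fun i => k i + 1) 0 : Fin (m+n+1) → ℕ) j : ℂ))) /
      (∏ i : Fin (m + n + 1),
        ((((Fin.snoc (fun i => k i + 1) 0 : Fin (m+n+1) → ℕ) i).factorial : ℂ) *
          ((((Fin.snoc (fun i => k i + 1) 0 : Fin (m+n+1) → ℕ) i) + s).factorial : ℂ))) *
      (s.factorial : ℂ) =
    (C * ∏ i : Fin (m + n), ∏ j ∈ Finset.Ioi i, ((k i : ℂ) - (k j : ℂ))) /
      ∏ i : Fin (m + n), (((k i).factorial : ℂ) * ((k i + (s+1)).factorial : ℂ))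
  have h1 : (∏ i : Fin (m + n + 1), ∏ j ∈ Finset.Ioi i,
        (((Fin.snoc (fun i => k i + 1) 0 : Fin (m+n+1) → ℕ) i : ℂ) -
          ((Fin.snoc (fun i => k i + 1) 0 : Fin (m+n+1) → ℕ) j : ℂ))) =
      (∏ i : Fin (m + n), ∏ j ∈ Finset.Ioi i, ((k i : ℂ) - (k j : ℂ))) *
        ∏ i : Fin (m + n), ((k i : ℂ) + 1) := by
    rw [vand_split (fun t : Fin ((m+n)+1) => (((Fin.snoc (fun i => k i + 1) 0 : Fin (m+n+1) → ℕ) t : ℕ) : ℂ))]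
    congr 1
    · refine Finset.prod_congr rfl fun i _ => Finset.prod_congr rfl fun j _ => ?_
      simp only [Fin.snoc_castSucc]
      push_cast; ring
    · refine Finset.prod_congr rfl fun i _ => ?_
      simp only [Fin.snoc_castSucc, Fin.snoc_last]
      push_cast; ring
  rw [h1]
  have h2 : (∏ i : Fin (m + n + 1),
        ((((Fin.snoc (fun i => k i + 1) 0 : Fin (m+n+1) → ℕ) i).factorial : ℂ) *
          ((((Fin.snoc (fun i => k i + 1) 0 : Fin (m+n+1) → ℕ) i) + s).factorial : ℂ))) =
      ((∏ i : Fin (m + n), (((k i).factorial : ℂ) * ((k i + (s+1)).factorial : ℂ))) *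
        ∏ i : Fin (m + n), ((k i : ℂ) + 1)) * (s.factorial : ℂ) := by
    rw [Fin.prod_univ_castSucc]
    simp only [Fin.snoc_castSucc, Fin.snoc_last]
    rw [← Finset.prod_mul_distrib]
    congr 1
    · refine Finset.prod_congr rfl fun i _ => ?_
      have e1 : k i + 1 + s = (k i + (s+1)) := by omega
      rw [e1, Nat.factorial_succ]
      push_cast; ring
    · norm_num
  rw [h2]
  have hP : (∏ i : Fin (m + n), ((k i : ℂ) + 1)) ≠ 0 :=
    Finset.prod_ne_zero_iff.mpr fun i _ => Nat.cast_add_one_ne_zero (k i)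
  have hD : (∏ i : Fin (m + n), (((k i).factorial : ℂ) * ((k i + (s+1)).factorial : ℂ))) ≠ 0 :=
    Finset.prod_ne_zero_iff.mpr fun i _ => mul_ne_zero
      (Nat.cast_ne_zero.mpr (Nat.factorial_ne_zero _))
      (Nat.cast_ne_zero.mpr (Nat.factorial_ne_zero _))
  have hS : ((s.factorial : ℂ)) ≠ 0 := Nat.cast_ne_zero.mpr (Nat.factorial_ne_zero _)
  field_simp

lemma coeffP (m n : ℕ) (d : Fin (m + n + 1) → ℕ) (hd : d (Fin.last (m + n)) = 0) :
    MvPolynomial.coeff (Finsupp.equivFunOnFinite.symm d)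
      (∏ a : Fin m, ∏ b : Fin (n + 1),
        (X (Fin.castAdd (n + 1) a) - X (Fin.natAdd m b) : MvPolynomial (Fin (m + n + 1)) ℂ)) =
    (if ∀ a : Fin m, 1 ≤ d (Fin.castSucc (Fin.castAdd n a)) then
      MvPolynomial.coeff (Finsupp.equivFunOnFinite.symm
          (fun i : Fin (m + n) => d i.castSucc - (if (i : ℕ) < m then 1 else 0)))
        (∏ a : Fin m, ∏ b : Fin n,
          (X (Fin.castAdd n a) - X (Fin.natAdd m b) : MvPolynomial (Fin (m + n)) ℂ))
    else 0) := by
  set t : Fin (m + n + 1) := Fin.last (m + n) with ht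
  have hct : ∀ i : Fin (m + n), Fin.castSucc i ≠ t := fun i => Fin.ne_of_lt (Fin.castSucc_lt_last i)
  set Pnew : MvPolynomial (Fin (m + n)) ℂ :=
    ∏ a : Fin m, ∏ b : Fin n, (X (Fin.castAdd n a) - X (Fin.natAdd m b)) with hPnew
  have hsplit : (∏ a : Fin m, ∏ b : Fin (n + 1),
        (X (Fin.castAdd (n + 1) a) - X (Fin.natAdd m b) : MvPolynomial (Fin (m + n + 1)) ℂ)) =
      (rename Fin.castSucc Pnew) *
        ∏ a : Fin m, (X (Fin.castSucc (Fin.castAdd n a)) - X t) := by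
    rw [hPnew, map_prod, ← Finset.prod_mul_distrib]
    refine Finset.prod_congr rfl fun a _ => ?_
    rw [show ((∏ b : Fin (n + 1),
        (X (Fin.castAdd (n + 1) a) - X (Fin.natAdd m b) : MvPolynomial (Fin (m + n + 1)) ℂ))) =
      ∏ b : Fin ((n) + 1),
        (X (Fin.castAdd (n + 1) a) - X (Fin.natAdd m b) : MvPolynomial (Fin (m + n + 1)) ℂ) from rfl,
      Fin.prod_univ_castSucc, map_prod]
    congr 1
    refine Finset.prod_congr rfl fun b _ => ?_
    rw [map_sub, rename_X, rename_X]
    rfl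
  rw [coeff_aeval_elim t _ _ (by simpa using hd), hsplit, map_mul]
  have hψQ : (aeval (fun i => if i = t then (0 : MvPolynomial (Fin (m+n+1)) ℂ) else X i))
      (rename Fin.castSucc Pnew) = rename Fin.castSucc Pnew := by
    rw [aeval_rename]
    have : ((fun i => if i = t then (0 : MvPolynomial (Fin (m+n+1)) ℂ) else X i) ∘ Fin.castSucc)
        = fun i => (X (Fin.castSucc i) : MvPolynomial (Fin (m+n+1)) ℂ) := by
      funext i; simp [Function.comp, hct i]
    rw [this]
    exact DFunLike.congr_fun (MvPolynomial.algHom_ext fun i => by simp) Pnew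
  have hψR : (aeval (fun i => if i = t then (0 : MvPolynomial (Fin (m+n+1)) ℂ) else X i))
      (∏ a : Fin m, (X (Fin.castSucc (Fin.castAdd n a)) - X t : MvPolynomial (Fin (m+n+1)) ℂ)) =
      ∏ a : Fin m, (X (Fin.castSucc (Fin.castAdd n a)) : MvPolynomial (Fin (m+n+1)) ℂ) := by
    refine (map_prod _ _ _).trans ?_
    refine Finset.prod_congr rfl fun a _ => ?_
    rw [map_sub, aeval_X, aeval_X, if_pos rfl, if_neg (hct _), sub_zero]
  rw [hψQ, hψR]
  have hXprod : (∏ a : Fin m, (X (Fin.castSucc (Fin.castAdd n a)) : MvPolynomial (Fin (m+n+1)) ℂ))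
      = rename Fin.castSucc (∏ a : Fin m, (X (Fin.castAdd n a) : MvPolynomial (Fin (m+n)) ℂ)) := by
    rw [map_prod]
    exact Finset.prod_congr rfl fun a _ => (rename_X _ _).symm
  rw [hXprod, ← map_mul]
  set d₀ : Fin (m+n) →₀ ℕ := Finsupp.equivFunOnFinite.symm (fun i => d i.castSucc) with hd₀
  have hdmap : (Finsupp.equivFunOnFinite.symm d) = Finsupp.mapDomain Fin.castSucc d₀ := by
    ext j
    induction j using Fin.lastCases with
    | last =>
      rw [Finsupp.mapDomain_notin_range]
      · simpa using hd
      · rintro ⟨i, hi⟩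
        exact hct i hi
    | cast i =>
      rw [Finsupp.mapDomain_apply (Fin.castSucc_injective _)]
      simp [hd₀]
  rw [hdmap, coeff_rename_mapDomain _ (Fin.castSucc_injective _)]
  rw [mul_comm, prod_X_eq_monomial, coeff_monomial_mul']
  set u' : Fin (m+n) →₀ ℕ :=
    Finsupp.equivFunOnFinite.symm (fun i : Fin (m+n) => if (i:ℕ) < m then 1 else 0) with hu'
  have hu : (∑ a : Fin m, Finsupp.single (Fin.castAdd n a) (1:ℕ)) = u' := by
    ext j
    rw [Finset.sum_apply']
    by_cases hj : (j:ℕ) < m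
    · rw [Finset.sum_eq_single_of_mem (⟨(j:ℕ), hj⟩ : Fin m) (Finset.mem_univ _)]
      · have : Fin.castAdd n (⟨(j:ℕ), hj⟩ : Fin m) = j := by
          apply Fin.ext; simp
        rw [this, Finsupp.single_apply, if_pos rfl, hu']
        simp [hj]
      · intro a _ ha
        rw [Finsupp.single_apply, if_neg]
        intro hc
        apply ha
        apply Fin.ext
        simpa using (congrArg (Fin.val) hc)
    · rw [Finset.sum_eq_zero, hu']
      · simp [hj]
      · intro a _
        rw [Finsupp.single_apply, if_neg]
        intro hc
        apply hj
        rw [← congrArg Fin.val hc]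
        simpa using a.isLt
  rw [hu]
  have hcond : (u' ≤ d₀) ↔ ∀ a : Fin m, 1 ≤ d (Fin.castSucc (Fin.castAdd n a)) := by
    rw [Finsupp.le_def]
    constructor
    · intro hle a
      have := hle (Fin.castAdd n a)
      simpa [hu', hd₀, a.isLt] using this
    · intro hcd i
      by_cases hi : (i:ℕ) < m
      · have := hcd ⟨(i:ℕ), hi⟩
        have hii : Fin.castAdd n (⟨(i:ℕ), hi⟩ : Fin m) = i := by apply Fin.ext; simp
        rw [hii] at this
        simpa [hu', hd₀, hi] using this
      · simp [hu', hd₀, hi]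
  have hsub : d₀ - u' = Finsupp.equivFunOnFinite.symm
      (fun i : Fin (m+n) => d i.castSucc - (if (i : ℕ) < m then 1 else 0)) := by
    ext j
    rw [Finsupp.tsub_apply]
    simp [hd₀, hu']
  rw [hsub]
  by_cases hco : ∀ a : Fin m, 1 ≤ d (Fin.castSucc (Fin.castAdd n a))
  · rw [if_pos (hcond.mpr hco), if_pos hco, one_mul]
  · rw [if_neg (fun hh => hco (hcond.mp hh)), if_neg hco]

/-- extension of `k` by `k+1` on first `m+n` coords and `0` at the end -/
noncomputable def kp (m n : ℕ) (k : Fin (m + n) → ℕ) : Fin (m + n + 1) → ℕ :=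
  Fin.snoc (fun i => k i + 1) 0

/-- the reindexing map on summation indices -/
noncomputable def iota (m n : ℕ) (l : Fin (m + n) → ℕ) : Fin (m + n + 1) → ℕ :=
  Fin.snoc (fun i => if (i : ℕ) < m then l i else l i + 1) 0

lemma kp_castSucc (m n : ℕ) (k : Fin (m + n) → ℕ) (i : Fin (m + n)) :
    kp m n k (Fin.castSucc i) = k i + 1 := by
  simp [kp]

lemma kp_last (m n : ℕ) (k : Fin (m + n) → ℕ) : kp m n k (Fin.last (m + n)) = 0 := by
  simp [kp]

lemma iota_castSucc (m n : ℕ) (l : Fin (m + n) → ℕ) (i : Fin (m + n)) :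
    iota m n l (Fin.castSucc i) = if (i : ℕ) < m then l i else l i + 1 := by
  simp [iota]

lemma iota_last (m n : ℕ) (l : Fin (m + n) → ℕ) : iota m n l (Fin.last (m + n)) = 0 := by
  simp [iota]

lemma iota_first (m n : ℕ) (l : Fin (m + n) → ℕ) (a : Fin m) :
    iota m n l (Fin.castAdd (n + 1) a) = l (Fin.castAdd n a) := by
  rw [show Fin.castAdd (n+1) a = Fin.castSucc (Fin.castAdd n a) from rfl, iota_castSucc,
    if_pos (by simpa using a.isLt)]

lemma iota_second (m n : ℕ) (l : Fin (m + n) → ℕ) (b : Fin n) :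
    iota m n l (Fin.natAdd m (Fin.castSucc b)) = l (Fin.natAdd m b) + 1 := by
  rw [show Fin.natAdd m (Fin.castSucc b) = Fin.castSucc (Fin.natAdd m b) from rfl, iota_castSucc,
    if_neg (by simp)]

lemma iota_secondlast (m n : ℕ) (l : Fin (m + n) → ℕ) :
    iota m n l (Fin.natAdd m (Fin.last n)) = 0 := by
  rw [show Fin.natAdd m (Fin.last n) = Fin.last (m + n) from rfl, iota_last]

/-- the summand of `rhsCoeff m (n+1) s (kp m n k)`, with normalized index types -/
noncomputable def oldT (m n s : ℕ) (k : Fin (m + n) → ℕ) (l : Fin (m + n + 1) → ℕ) : ℂ :=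
  (∏ a : Fin m, ∏ b ∈ Finset.Ioi a,
      ((l (Fin.castAdd (n + 1) a) : ℂ) - (l (Fin.castAdd (n + 1) b) : ℂ))) *
    (∏ a : Fin (n + 1), ∏ b ∈ Finset.Ioi a,
      ((l (Fin.natAdd m a) : ℂ) - (l (Fin.natAdd m b) : ℂ))) /
    (∏ i : Fin (m + n + 1), (((l i).factorial : ℂ) * ((l i + s).factorial : ℂ))) *
    (∏ a : Fin m, ∏ b : Fin (n + 1),
      (1 / ((l (Fin.castAdd (n + 1) a) : ℂ) + (l (Fin.natAdd m b) : ℂ) + s + 1))) *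
    MvPolynomial.coeff
      (Finsupp.equivFunOnFinite.symm (fun i => kp m n k i - l i))
      (∏ a : Fin m, ∏ b : Fin (n + 1),
        (X (Fin.castAdd (n + 1) a) - X (Fin.natAdd m b) :
          MvPolynomial (Fin (m + n + 1)) ℂ))

lemma rhs_expand (m n s : ℕ) (k : Fin (m + n) → ℕ) :
    rhsCoeff m (n + 1) s (kp m n k) =
      ∑ l ∈ Finset.Icc (0 : Fin (m + n + 1) → ℕ) (kp m n k), oldT m n s k l := rfl

lemma termEq (m n s : ℕ) (k l : Fin (m + n) → ℕ) (hl : ∀ i, l i ≤ k i) :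
    oldT m n s k (iota m n l) * (s.factorial : ℂ) =
      (∏ a : Fin m, ∏ b ∈ Finset.Ioi a,
          ((l (Fin.castAdd n a) : ℂ) - (l (Fin.castAdd n b) : ℂ))) *
        (∏ a : Fin n, ∏ b ∈ Finset.Ioi a,
          ((l (Fin.natAdd m a) : ℂ) - (l (Fin.natAdd m b) : ℂ))) /
        (∏ i : Fin (m + n), (((l i).factorial : ℂ) * ((l i + (s + 1)).factorial : ℂ))) *
        (∏ a : Fin m, ∏ b : Fin n,
          (1 / ((l (Fin.castAdd n a) : ℂ) + (l (Fin.natAdd m b) : ℂ) + ((s + 1 : ℕ) : ℂ) + 1))) *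
        MvPolynomial.coeff
          (Finsupp.equivFunOnFinite.symm (fun i => k i - l i))
          (∏ a : Fin m, ∏ b : Fin n,
            (X (Fin.castAdd n a) - X (Fin.natAdd m b) : MvPolynomial (Fin (m + n)) ℂ)) := by
  have eΔ1 : (∏ a : Fin m, ∏ b ∈ Finset.Ioi a,
      ((iota m n l (Fin.castAdd (n + 1) a) : ℂ) - (iota m n l (Fin.castAdd (n + 1) b) : ℂ))) =
      ∏ a : Fin m, ∏ b ∈ Finset.Ioi a,
        ((l (Fin.castAdd n a) : ℂ) - (l (Fin.castAdd n b) : ℂ)) := by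
    refine Finset.prod_congr rfl fun a _ => Finset.prod_congr rfl fun b _ => ?_
    rw [iota_first, iota_first]
  have eΔ2 : (∏ a : Fin (n + 1), ∏ b ∈ Finset.Ioi a,
      ((iota m n l (Fin.natAdd m a) : ℂ) - (iota m n l (Fin.natAdd m b) : ℂ))) =
      (∏ a : Fin n, ∏ b ∈ Finset.Ioi a,
        ((l (Fin.natAdd m a) : ℂ) - (l (Fin.natAdd m b) : ℂ))) *
        ∏ b : Fin n, ((l (Fin.natAdd m b) : ℂ) + 1) := by
    rw [vand_split (fun b : Fin (n + 1) => ((iota m n l (Fin.natAdd m b) : ℕ) : ℂ))]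
    congr 1
    · refine Finset.prod_congr rfl fun a _ => Finset.prod_congr rfl fun b _ => ?_
      rw [iota_second, iota_second]
      push_cast; ring
    · refine Finset.prod_congr rfl fun b _ => ?_
      rw [iota_second, iota_secondlast]
      push_cast; ring
  have eC : (∏ a : Fin m, ∏ b : Fin (n + 1),
      (1 / ((iota m n l (Fin.castAdd (n + 1) a) : ℂ) + (iota m n l (Fin.natAdd m b) : ℂ) + s + 1))) =
      (∏ a : Fin m, ∏ b : Fin n,
        (1 / ((l (Fin.castAdd n a) : ℂ) + (l (Fin.natAdd m b) : ℂ) + ((s + 1 : ℕ) : ℂ) + 1))) *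
        ∏ a : Fin m, (1 / ((l (Fin.castAdd n a) : ℂ) + s + 1)) := by
    rw [← Finset.prod_mul_distrib]
    refine Finset.prod_congr rfl fun a _ => ?_
    rw [Fin.prod_univ_castSucc]
    congr 1
    · refine Finset.prod_congr rfl fun b _ => ?_
      rw [iota_first, iota_second]
      congr 1
      push_cast; ring
    · rw [iota_first, iota_secondlast]
      norm_num
  have eco : MvPolynomial.coeff
      (Finsupp.equivFunOnFinite.symm (fun i => kp m n k i - iota m n l i))
      (∏ a : Fin m, ∏ b : Fin (n + 1),
        (X (Fin.castAdd (n + 1) a) - X (Fin.natAdd m b) : MvPolynomial (Fin (m + n + 1)) ℂ)) =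
      MvPolynomial.coeff (Finsupp.equivFunOnFinite.symm (fun i => k i - l i))
        (∏ a : Fin m, ∏ b : Fin n,
          (X (Fin.castAdd n a) - X (Fin.natAdd m b) : MvPolynomial (Fin (m + n)) ℂ)) := by
    rw [coeffP m n _ (by rw [kp_last, iota_last])]
    rw [if_pos]
    · congr 1
      congr 1
      funext i
      rw [kp_castSucc, iota_castSucc]
      by_cases hi : (i : ℕ) < m
      · rw [if_pos hi, if_pos hi]
        have := hl i; omega
      · rw [if_neg hi, if_neg hi]
        omega
    · intro a
      have h1 : kp m n k (Fin.castSucc (Fin.castAdd n a)) = k (Fin.castAdd n a) + 1 :=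
        kp_castSucc m n k _
      have h2 : iota m n l (Fin.castSucc (Fin.castAdd n a)) = l (Fin.castAdd n a) := by
        rw [iota_castSucc, if_pos (by simpa using a.isLt)]
      show 1 ≤ kp m n k (Fin.castSucc (Fin.castAdd n a)) - iota m n l (Fin.castSucc (Fin.castAdd n a))
      rw [h1, h2]
      have := hl (Fin.castAdd n a); omega
  have hQ : (∏ a : Fin m, ((l (Fin.castAdd n a) : ℂ) + s + 1)) ≠ 0 := by
    refine Finset.prod_ne_zero_iff.mpr fun a _ => ?_
    have : ((l (Fin.castAdd n a) : ℂ) + s + 1) = ((l (Fin.castAdd n a) + s + 1 : ℕ) : ℂ) := by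
      push_cast; ring
    rw [this]
    exact Nat.cast_ne_zero.mpr (by omega)
  have eD : (∏ a : Fin m, ((l (Fin.castAdd n a) : ℂ) + s + 1)) *
      (∏ i : Fin (m + n + 1), (((iota m n l i).factorial : ℂ) * ((iota m n l i + s).factorial : ℂ))) =
      (∏ i : Fin (m + n), (((l i).factorial : ℂ) * ((l i + (s + 1)).factorial : ℂ))) *
        (∏ b : Fin n, ((l (Fin.natAdd m b) : ℂ) + 1)) * (s.factorial : ℂ) := by
    rw [Fin.prod_univ_castSucc]
    have e1 : (∏ i : Fin (m + n),
        (((iota m n l (Fin.castSucc i)).factorial : ℂ) * ((iota m n l (Fin.castSucc i) + s).factorial : ℂ))) =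
        (∏ a : Fin m, (((l (Fin.castAdd n a)).factorial : ℂ) * ((l (Fin.castAdd n a) + s).factorial : ℂ))) *
        ∏ b : Fin n, (((l (Fin.natAdd m b) + 1).factorial : ℂ) * ((l (Fin.natAdd m b) + 1 + s).factorial : ℂ)) := by
      rw [Fin.prod_univ_add (fun i : Fin (m + n) =>
        (((iota m n l (Fin.castSucc i)).factorial : ℂ) * ((iota m n l (Fin.castSucc i) + s).factorial : ℂ)))]
      congr 1
      · refine Finset.prod_congr rfl fun a _ => ?_
        rw [iota_castSucc, if_pos (by simpa using a.isLt)]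
      · refine Finset.prod_congr rfl fun b _ => ?_
        rw [iota_castSucc, if_neg (by simp)]
    rw [e1, iota_last]
    have e2 : (∏ i : Fin (m + n), (((l i).factorial : ℂ) * ((l i + (s + 1)).factorial : ℂ))) =
        (∏ a : Fin m, (((l (Fin.castAdd n a)).factorial : ℂ) * ((l (Fin.castAdd n a) + (s + 1)).factorial : ℂ))) *
        ∏ b : Fin n, (((l (Fin.natAdd m b)).factorial : ℂ) * ((l (Fin.natAdd m b) + (s + 1)).factorial : ℂ)) :=
      Fin.prod_univ_add _
    rw [e2]
    have e3 : (∏ a : Fin m, ((l (Fin.castAdd n a) : ℂ) + s + 1)) *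
        (∏ a : Fin m, (((l (Fin.castAdd n a)).factorial : ℂ) * ((l (Fin.castAdd n a) + s).factorial : ℂ))) =
        ∏ a : Fin m, (((l (Fin.castAdd n a)).factorial : ℂ) * ((l (Fin.castAdd n a) + (s + 1)).factorial : ℂ)) := by
      rw [← Finset.prod_mul_distrib]
      refine Finset.prod_congr rfl fun a _ => ?_
      rw [show l (Fin.castAdd n a) + (s + 1) = (l (Fin.castAdd n a) + s) + 1 from rfl, Nat.factorial_succ]
      push_cast; ring
    have e4 : (∏ b : Fin n, (((l (Fin.natAdd m b) + 1).factorial : ℂ) * ((l (Fin.natAdd m b) + 1 + s).factorial : ℂ))) =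
        (∏ b : Fin n, (((l (Fin.natAdd m b)).factorial : ℂ) * ((l (Fin.natAdd m b) + (s + 1)).factorial : ℂ))) *
        ∏ b : Fin n, ((l (Fin.natAdd m b) : ℂ) + 1) := by
      rw [← Finset.prod_mul_distrib]
      refine Finset.prod_congr rfl fun b _ => ?_
      rw [show l (Fin.natAdd m b) + 1 + s = l (Fin.natAdd m b) + (s + 1) from by omega, Nat.factorial_succ]
      push_cast; ring
    calc (∏ a : Fin m, ((l (Fin.castAdd n a) : ℂ) + s + 1)) *
        ((∏ a : Fin m, (((l (Fin.castAdd n a)).factorial : ℂ) * ((l (Fin.castAdd n a) + s).factorial : ℂ))) *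
          (∏ b : Fin n, (((l (Fin.natAdd m b) + 1).factorial : ℂ) * ((l (Fin.natAdd m b) + 1 + s).factorial : ℂ))) *
          (((0 : ℕ).factorial : ℂ) * ((0 + s).factorial : ℂ)))
        = ((∏ a : Fin m, ((l (Fin.castAdd n a) : ℂ) + s + 1)) *
            (∏ a : Fin m, (((l (Fin.castAdd n a)).factorial : ℂ) * ((l (Fin.castAdd n a) + s).factorial : ℂ)))) *
          (∏ b : Fin n, (((l (Fin.natAdd m b) + 1).factorial : ℂ) * ((l (Fin.natAdd m b) + 1 + s).factorial : ℂ))) *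
          (((0 : ℕ).factorial : ℂ) * ((0 + s).factorial : ℂ)) := by ring
      _ = _ := by
        rw [e3, e4]
        simp only [Nat.zero_add, Nat.factorial_zero, Nat.cast_one, one_mul]
        ring
  have hCm : (∏ a : Fin m, (1 / ((l (Fin.castAdd n a) : ℂ) + s + 1))) =
      (∏ a : Fin m, ((l (Fin.castAdd n a) : ℂ) + s + 1))⁻¹ := by
    rw [← Finset.prod_inv_distrib]
    exact Finset.prod_congr rfl fun a _ => one_div _
  rw [oldT, eΔ1, eΔ2, eC, eco, hCm]
  set A := ∏ a : Fin m, ∏ b ∈ Finset.Ioi a, ((l (Fin.castAdd n a) : ℂ) - (l (Fin.castAdd n b) : ℂ))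
  set B := ∏ a : Fin n, ∏ b ∈ Finset.Ioi a, ((l (Fin.natAdd m a) : ℂ) - (l (Fin.natAdd m b) : ℂ))
  set P := ∏ b : Fin n, ((l (Fin.natAdd m b) : ℂ) + 1) with hP'
  set Q := ∏ a : Fin m, ((l (Fin.castAdd n a) : ℂ) + s + 1) with hQ'
  set Dold := ∏ i : Fin (m + n + 1), (((iota m n l i).factorial : ℂ) * ((iota m n l i + s).factorial : ℂ)) with hDold'
  set Dnew := ∏ i : Fin (m + n), (((l i).factorial : ℂ) * ((l i + (s + 1)).factorial : ℂ)) with hDnew'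
  set Cn := ∏ a : Fin m, ∏ b : Fin n,
    (1 / ((l (Fin.castAdd n a) : ℂ) + (l (Fin.natAdd m b) : ℂ) + ((s + 1 : ℕ) : ℂ) + 1)) with hCn'
  set co := MvPolynomial.coeff (Finsupp.equivFunOnFinite.symm (fun i => k i - l i))
    (∏ a : Fin m, ∏ b : Fin n,
      (X (Fin.castAdd n a) - X (Fin.natAdd m b) : MvPolynomial (Fin (m + n)) ℂ)) with hco'
  -- eD : Q * Dold = Dnew * P * s!
  have hP : P ≠ 0 := Finset.prod_ne_zero_iff.mpr fun b _ => Nat.cast_add_one_ne_zero _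
  have hDnew : Dnew ≠ 0 := Finset.prod_ne_zero_iff.mpr fun i _ => mul_ne_zero
    (Nat.cast_ne_zero.mpr (Nat.factorial_ne_zero _)) (Nat.cast_ne_zero.mpr (Nat.factorial_ne_zero _))
  have hS : ((s.factorial : ℂ)) ≠ 0 := Nat.cast_ne_zero.mpr (Nat.factorial_ne_zero _)
  have hDoldv : Dold = Dnew * P * (s.factorial : ℂ) * Q⁻¹ := by
    rw [eq_mul_inv_iff_mul_eq₀ hQ, mul_comm Dold Q]
    exact eD
  rw [hDoldv]
  field_simp

lemma rhsB (m n s : ℕ) (k : Fin (m + n) → ℕ) :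
    rhsCoeff m (n + 1) s (kp m n k) * (s.factorial : ℂ) = rhsCoeff m n (s + 1) k := by
  rw [rhs_expand, Finset.sum_mul, rhsCoeff]
  have hinj : ∀ x ∈ Finset.Icc (0 : Fin (m + n) → ℕ) k,
      ∀ y ∈ Finset.Icc (0 : Fin (m + n) → ℕ) k, iota m n x = iota m n y → x = y := by
    intro x _ y _ hxy
    funext i
    have h := congrFun hxy (Fin.castSucc i)
    rw [iota_castSucc, iota_castSucc] at h
    by_cases hi : (i : ℕ) < m
    · rwa [if_pos hi, if_pos hi] at h
    · rw [if_neg hi, if_neg hi] at h; omega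
  have hsub : (Finset.Icc (0 : Fin (m + n) → ℕ) k).image (iota m n) ⊆
      Finset.Icc (0 : Fin (m + n + 1) → ℕ) (kp m n k) := by
    intro l' hl'
    obtain ⟨l, hl, rfl⟩ := Finset.mem_image.mp hl'
    rw [Finset.mem_Icc] at hl ⊢
    have hl2 : ∀ i, l i ≤ k i := Pi.le_def.mp hl.2
    refine ⟨Pi.le_def.mpr fun i => Nat.zero_le _, Pi.le_def.mpr fun j => ?_⟩
    induction j using Fin.lastCases with
    | last => rw [iota_last, kp_last]
    | cast i =>
      rw [iota_castSucc, kp_castSucc]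
      by_cases hi : (i : ℕ) < m
      · rw [if_pos hi]; exact (hl2 i).trans (Nat.le_succ _)
      · rw [if_neg hi]; exact Nat.succ_le_succ (hl2 i)
  have hvanish : ∀ l' ∈ Finset.Icc (0 : Fin (m + n + 1) → ℕ) (kp m n k),
      l' ∉ (Finset.Icc (0 : Fin (m + n) → ℕ) k).image (iota m n) →
      oldT m n s k l' * (s.factorial : ℂ) = 0 := by
    intro l' hmem hnot
    rw [Finset.mem_Icc] at hmem
    have hub : ∀ j, l' j ≤ kp m n k j := Pi.le_def.mp hmem.2
    have hlast : l' (Fin.last (m + n)) = 0 := by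
      have := hub (Fin.last (m + n))
      rw [kp_last] at this
      omega
    by_cases hb : ∃ b : Fin n, l' (Fin.castSucc (Fin.natAdd m b)) = 0
    · obtain ⟨b₀, hb₀⟩ := hb
      have hV : (∏ a : Fin (n + 1), ∏ b ∈ Finset.Ioi a,
          ((l' (Fin.natAdd m a) : ℂ) - (l' (Fin.natAdd m b) : ℂ))) = 0 := by
        apply Finset.prod_eq_zero (Finset.mem_univ (Fin.castSucc b₀))
        apply Finset.prod_eq_zero (Finset.mem_Ioi.mpr (Fin.castSucc_lt_last b₀))
        show ((l' (Fin.natAdd m (Fin.castSucc b₀)) : ℂ) - (l' (Fin.natAdd m (Fin.last n)) : ℂ)) = 0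
        rw [show Fin.natAdd m (Fin.castSucc b₀) = Fin.castSucc (Fin.natAdd m b₀) from rfl,
          show Fin.natAdd m (Fin.last n) = Fin.last (m + n) from rfl, hb₀, hlast]
        norm_num
      rw [oldT, hV]
      ring
    · push_neg at hb
      by_cases ha : ∀ a : Fin m, l' (Fin.castSucc (Fin.castAdd n a)) ≤ k (Fin.castAdd n a)
      · exfalso
        apply hnot
        refine Finset.mem_image.mpr
          ⟨fun i => if (i : ℕ) < m then l' (Fin.castSucc i) else l' (Fin.castSucc i) - 1, ?_, ?_⟩
        · rw [Finset.mem_Icc]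
          refine ⟨Pi.le_def.mpr fun i => Nat.zero_le _, Pi.le_def.mpr fun i => ?_⟩
          by_cases hi : (i : ℕ) < m
          · rw [if_pos hi]
            have ha' := ha ⟨(i : ℕ), hi⟩
            have hii : Fin.castAdd n (⟨(i : ℕ), hi⟩ : Fin m) = i := by apply Fin.ext; simp
            rwa [hii] at ha'
          · rw [if_neg hi]
            have := hub (Fin.castSucc i)
            rw [kp_castSucc] at this
            omega
        · funext j
          induction j using Fin.lastCases with
          | last => rw [iota_last, hlast]
          | cast i =>
            rw [iota_castSucc]
            by_cases hi : (i : ℕ) < m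
            · rw [if_pos hi, if_pos hi]
            · rw [if_neg hi, if_neg hi]
              have hge : m ≤ (i : ℕ) := Nat.le_of_not_lt hi
              have hb' := hb ⟨(i : ℕ) - m, by omega⟩
              have hii : Fin.natAdd m (⟨(i : ℕ) - m, by omega⟩ : Fin n) = i := by
                apply Fin.ext; simp; omega
              rw [hii] at hb'
              omega
      · push_neg at ha
        obtain ⟨a₀, ha₀⟩ := ha
        have hc : MvPolynomial.coeff
            (Finsupp.equivFunOnFinite.symm (fun i => kp m n k i - l' i))
            (∏ a : Fin m, ∏ b : Fin (n + 1),
              (X (Fin.castAdd (n + 1) a) - X (Fin.natAdd m b) :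
                MvPolynomial (Fin (m + n + 1)) ℂ)) = 0 := by
          rw [coeffP m n _ (by rw [kp_last, hlast])]
          rw [if_neg]
          intro hall
          have h1 := hall a₀
          have h2 := hub (Fin.castSucc (Fin.castAdd n a₀))
          rw [kp_castSucc] at h2
          have h3 : kp m n k (Fin.castSucc (Fin.castAdd n a₀)) = k (Fin.castAdd n a₀) + 1 :=
            kp_castSucc m n k _
          rw [h3] at h1
          omega
        rw [oldT, hc]
        ring
  calc (∑ l' ∈ Finset.Icc (0 : Fin (m + n + 1) → ℕ) (kp m n k), oldT m n s k l' * (s.factorial : ℂ))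
      = ∑ l' ∈ (Finset.Icc (0 : Fin (m + n) → ℕ) k).image (iota m n),
          oldT m n s k l' * (s.factorial : ℂ) := (Finset.sum_subset hsub hvanish).symm
    _ = ∑ l ∈ Finset.Icc (0 : Fin (m + n) → ℕ) k, oldT m n s k (iota m n l) * (s.factorial : ℂ) :=
        Finset.sum_image hinj
    _ = _ := Finset.sum_congr rfl fun l hl =>
        termEq m n s k l (Pi.le_def.mp (Finset.mem_Icc.mp hl).2)

/-- if the identity
`C ∑ Δ(k)/∏(kᵢ!(kᵢ+s)!) z^k = ∑ [Δ(k₁…k_m)Δ(k_{m+1}…k_{m+n})/∏(kᵢ!(kᵢ+s)!)]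
∏(zᵢ-zⱼ)/(kᵢ+kⱼ+s+1) z^k` holds (coefficientwise, i.e. as formal power
series) for parameters `(m, n, s)` and constant `C`, then the same identity
with the same constant `C` holds for parameters `(m, n-1, s+1)`. -/
theorem stmt14 (C : ℂ) (m n s : ℕ) (hn : 1 ≤ n)
    (h : ∀ k : Fin (m + n) → ℕ, lhsCoeff C m n s k = rhsCoeff m n s k) :
    ∀ k : Fin (m + (n - 1)) → ℕ,
      lhsCoeff C m (n - 1) (s + 1) k = rhsCoeff m (n - 1) (s + 1) k := by
  obtain ⟨n', rfl⟩ : ∃ n', n = n' + 1 := ⟨n - 1, by omega⟩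
  intro k
  show lhsCoeff C m n' (s + 1) k = rhsCoeff m n' (s + 1) k
  have hk : lhsCoeff C m (n' + 1) s (kp m n' k) = rhsCoeff m (n' + 1) s (kp m n' k) := h _
  have h1 := lhsA C m n' s k
  have h2 := rhsB m n' s k
  rw [← h1, ← h2]
  exact congrArg (fun t => t * (s.factorial : ℂ)) hk
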